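/- Let E be a finite-dimensional complex inner product space (inner product conjugate-linear in the first argument), T : E →ₗ[ℂ] E self-adjoint (⟪T x, y⟫ = ⟪x, T y⟫ for all x, y), and H : E → ℝ defined by H Ψ = Re ⟪Ψ, T Ψ⟫. Let K be a complex subspace of E and P the orthogonal projection of E onto K. Define ω : E → E → ℝ by ω x y = 2 * Im ⟪x, y⟫. Then for every Ψ ∈ E and every ξ ∈ K: fderiv ℝ H Ψ ξ = ω ((−Complex.I) • (P (T Ψ))) ξ. In other words, on the subspace K the Hamiltonian vector field of the restricted energy function is obtained by replacing ĤΨ with its orthogonal projection onto K: X_{H_M}(Ψ) = −i P(ĤΨ). -/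

import Mathlib

open scoped InnerProductSpace

theorem tdvp_projected_hamiltonian_flow
    {E : Type*} [NormedAddCommGroup E] [InnerProductSpace ℂ E] [FiniteDimensional ℂ E]
    (T : E →ₗ[ℂ] E) (hT : ∀ x y : E, ⟪T x, y⟫_ℂ = ⟪x, T y⟫_ℂ)
    (H : E → ℝ) (hH : ∀ Ψ : E, H Ψ = (⟪Ψ, T Ψ⟫_ℂ).re)
    (ω : E → E → ℝ) (hω : ∀ x y : E, ω x y = 2 * (⟪x, y⟫_ℂ).im)
    (K : Submodule ℂ E) :
    ∀ Ψ : E, ∀ ξ ∈ K,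
      fderiv ℝ H Ψ ξ = ω ((-Complex.I) • ((Submodule.orthogonalProjectionOnto K (T Ψ) : K) : E)) ξ := by
  intro Ψ ξ hξ
  have hTc : HasFDerivAt (fun x : E => T x)
      ((T.toContinuousLinearMap).restrictScalars ℝ) Ψ :=
    ((T.toContinuousLinearMap).restrictScalars ℝ).hasFDerivAt
  have hinner := (hasFDerivAt_id Ψ).inner ℂ hTc
  have hHd : HasFDerivAt H
      (Complex.reCLM.comp ((fderivInnerCLM ℂ (Ψ, T Ψ)).comp
        ((ContinuousLinearMap.id ℝ E).prod ((T.toContinuousLinearMap).restrictScalars ℝ)))) Ψ := by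
    have := Complex.reCLM.hasFDerivAt.comp Ψ hinner
    have hfun : H = ⇑Complex.reCLM ∘ fun t => ⟪id t, T t⟫_ℂ := by
      funext x
      exact hH x
    rw [hfun]
    exact this
  rw [hHd.fderiv]
  -- LHS value
  have lhs : (Complex.reCLM.comp ((fderivInnerCLM ℂ (Ψ, T Ψ)).comp
      ((ContinuousLinearMap.id ℝ E).prod ((T.toContinuousLinearMap).restrictScalars ℝ)))) ξ
      = (⟪Ψ, T ξ⟫_ℂ + ⟪ξ, T Ψ⟫_ℂ).re := by
    simp [fderivInnerCLM]
  rw [lhs, hω]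
  have hproj : ⟪((Submodule.orthogonalProjectionOnto K (T Ψ) : K) : E), ξ⟫_ℂ = ⟪T Ψ, ξ⟫_ℂ := by
    have h0 : ⟪T Ψ - ((Submodule.orthogonalProjectionOnto K (T Ψ) : K) : E), ξ⟫_ℂ = 0 := K.starProjection_inner_eq_zero (T Ψ) ξ hξ
    rw [inner_sub_left] at h0
    linear_combination -h0
  rw [inner_smul_left, hproj]
  rw [← hT Ψ ξ, ← inner_conj_symm (𝕜 := ℂ) ξ (T Ψ)]
  simp [Complex.add_re, Complex.mul_im]
  have hre : (⟪ξ, T Ψ⟫_ℂ).re = (⟪T Ψ, ξ⟫_ℂ).re := by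
    rw [← inner_conj_symm (𝕜 := ℂ) ξ (T Ψ)]; exact Complex.conj_re _
  rw [hre]; ring
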